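/- (S_1, S_start, {1}, [0, ∞))↓ holds: from every configuration in which robot r is in state S_1 with observed distance exactly 1 and robot s is in state S_start with any observed distance, every fair SSynch execution of Algorithm 1 solves rendezvous. -/
import Mathlib


/-- Points in the plane. -/
abbrev Pt := EuclideanSpace ℝ (Fin 2)

/-- Observed directions. -/
inductive Dir | left | right
deriving DecidableEq

/-- The six internal states of Algorithm 1. -/
inductive St | start | s1 | s2 (d : Dir) | s3 | finish
deriving DecidableEq

/-- A local coordinate frame: an orthogonal linear map of the plane. -/
abbrev Frame := Pt ≃ₗᵢ[ℝ] Pt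

/-- Observed direction of a local vector `v`: `right` if its first coordinate is
positive, or is zero with positive second coordinate; `left` otherwise. -/
noncomputable def obsDir (v : Pt) : Dir :=
  if 0 < v 0 ∨ (v 0 = 0 ∧ 0 < v 1) then Dir.right else Dir.left

/-- Local vector observed by a robot with unit distance `u` and frame `A`,
located at `p`, looking at the other robot at `q`. -/
noncomputable def obsVec (u : ℝ) (A : Frame) (p q : Pt) : Pt := u⁻¹ • (A (q - p))

/-- Observed distance. -/
noncomputable def obsDist (u : ℝ) (p q : Pt) : ℝ := ‖q - p‖ / u

/-- Algorithm 1: given the current state, the observed distance `d` and the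
observed direction `dir`, returns the new state and the coefficient `μ` such
that the (global) destination is `p + μ • (q - p)` (i.e. local destination `μ • v`). -/
noncomputable def algo1 (s : St) (d : ℝ) (dir : Dir) : St × ℝ :=
  if d = 0 then (s, 0)
  else match s with
  | .start => if d < 1 then (.s1, 1 - 1/d) else (.s2 dir, 1)
  | .s1 => if d ≤ 1 then (.finish, 0) else (.s2 dir, 1)
  | .s2 d' =>
      if dir = d' then (.finish, 1)
      else if d < 1/2 then (.finish, 0)
      else if d < 1 then (.s3, 1/2)
      else (.s2 d', 1/2)
  | .s3 => if d < 1/4 then (.finish, 0) else (.finish, 1)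
  | .finish => if d ≤ 1 then (.finish, 0) else (.finish, 1)

/-- A configuration: positions and internal states of the two robots
(robot `r` is `false`, robot `s` is `true`). -/
structure Config where
  pos : Bool → Pt
  st : Bool → St

/-- Result (new position, new state) of one activation of robot `i`. -/
noncomputable def stepRobot (u : Bool → ℝ) (A : Bool → Frame) (c : Config) (i : Bool) :
    Pt × St :=
  let p := c.pos i
  let q := c.pos (!i)
  let d := obsDist (u i) p q
  let dir := obsDir (obsVec (u i) (A i) p q)
  let r := algo1 (c.st i) d dir
  (p + r.2 • (q - p), r.1)

/-- One synchronous round in which exactly the robots `i` with `act i = true`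
are activated; both activated robots observe the same (pre-round) configuration,
and rigidly reach their computed destinations. -/
noncomputable def stepConfig (u : Bool → ℝ) (A : Bool → Frame) (act : Bool → Bool)
    (c : Config) : Config where
  pos i := if act i then (stepRobot u A c i).1 else c.pos i
  st i := if act i then (stepRobot u A c i).2 else c.st i

/-- The configuration after `n` rounds of the SSynch execution of Algorithm 1
under schedule `sched`, starting from `c0`. -/
noncomputable def run (u : Bool → ℝ) (A : Bool → Frame) (sched : ℕ → Bool → Bool)
    (c0 : Config) : ℕ → Config
  | 0 => c0
  | n + 1 => stepConfig u A (sched n) (run u A sched c0 n)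

/-- A legal fair SSynch schedule: at every round a nonempty set of robots is
activated, and each robot is activated infinitely often. -/
def FairSched (sched : ℕ → Bool → Bool) : Prop :=
  (∀ n, sched n false = true ∨ sched n true = true) ∧
  (∀ i n, ∃ m, n ≤ m ∧ sched m i = true)

/-- Rendezvous is solved: from some round on, the two robots occupy the same
point and never move again. -/
noncomputable def Solves (u : Bool → ℝ) (A : Bool → Frame) (sched : ℕ → Bool → Bool)
    (c0 : Config) : Prop :=
  ∃ N : ℕ, ∀ n, N ≤ n → ∀ i, (run u A sched c0 n).pos i = (run u A sched c0 N).pos false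

/-- Conditions on a robot: one of the six internal states, or `S₂⁼` / `S₂≠`. -/
inductive Cond | start | s1 | s2 (d : Dir) | s2eq | s2ne | s3 | finish

/-- A robot in state `s` whose currently observed direction is `dir`
satisfies the condition. -/
def Cond.sat : Cond → St → Dir → Prop
  | .start, s, _ => s = .start
  | .s1, s, _ => s = .s1
  | .s2 d', s, _ => s = .s2 d'
  | .s2eq, s, dir => s = .s2 dir
  | .s2ne, s, dir => ∃ d', s = St.s2 d' ∧ d' ≠ dir
  | .s3, s, _ => s = .s3
  | .finish, s, _ => s = .finish

/-- `(S_a, S_b, I_a, I_b)↓` : for every choice of the units and frames, from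
every configuration in which robot `r` satisfies condition `Ca` with observed
distance in `Ia` and robot `s` satisfies condition `Cb` with observed distance
in `Ib`, every fair SSynch execution of Algorithm 1 solves Rendezvous. -/
noncomputable def Down (Ca Cb : Cond) (Ia Ib : Set ℝ) : Prop :=
  ∀ (u : Bool → ℝ) (A : Bool → Frame), (∀ i, 0 < u i) →
    ∀ c0 : Config,
      Ca.sat (c0.st false)
        (obsDir (obsVec (u false) (A false) (c0.pos false) (c0.pos true))) →
      obsDist (u false) (c0.pos false) (c0.pos true) ∈ Ia →
      Cb.sat (c0.st true)
        (obsDir (obsVec (u true) (A true) (c0.pos true) (c0.pos false))) →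
      obsDist (u true) (c0.pos true) (c0.pos false) ∈ Ib →
      ∀ sched : ℕ → Bool → Bool, FairSched sched → Solves u A sched c0



/-- If the two robots coincide, a step does not move robot `i`. -/
lemma stepRobot_fst_of_eq (u : Bool → ℝ) (A : Bool → Frame) (c : Config) (i : Bool)
    (h : c.pos (!i) = c.pos i) : (stepRobot u A c i).1 = c.pos i := by
  simp [stepRobot, h]

/-- Once the robots coincide, positions never change. -/
lemma run_frozen (u : Bool → ℝ) (A : Bool → Frame) (sched : ℕ → Bool → Bool)
    (c0 : Config) (N : ℕ)
    (h : ∀ i, (run u A sched c0 N).pos i = (run u A sched c0 N).pos false) :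
    ∀ n, N ≤ n → ∀ i, (run u A sched c0 n).pos i = (run u A sched c0 N).pos false := by
  intro n hn
  induction n with
  | zero =>
    have : N = 0 := Nat.le_zero.mp hn
    subst this; exact h
  | succ n ih =>
    rcases Nat.lt_or_ge N (n + 1) with h' | h'
    · have hn' : N ≤ n := Nat.lt_succ_iff.mp h'
      have ihn := ih hn'
      intro i
      have hrun : run u A sched c0 (n + 1) = stepConfig u A (sched n) (run u A sched c0 n) := rfl
      rw [hrun]
      simp only [stepConfig]
      split
      · rw [stepRobot_fst_of_eq]
        · exact ihn i
        · rw [ihn, ihn]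
      · exact ihn i
    · have : N = n + 1 := le_antisymm hn h'
      subst this; exact h

/-- A robot in state `s1` or `finish` observing distance 1 stays and finishes. -/
lemma stepR_stay (u : Bool → ℝ) (A : Bool → Frame) (c : Config) (i : Bool)
    (hst : c.st i = .s1 ∨ c.st i = .finish)
    (hd : obsDist (u i) (c.pos i) (c.pos (!i)) = 1) :
    stepRobot u A c i = (c.pos i, .finish) := by
  rcases hst with h | h <;> simp [stepRobot, h, hd, algo1]

/-- A robot in state `s1` or `finish` observing distance `> 1` jumps onto the other. -/
lemma stepR_far (u : Bool → ℝ) (A : Bool → Frame) (c : Config) (i : Bool)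
    (hst : c.st i = .s1 ∨ c.st i = .finish)
    (hd : 1 < obsDist (u i) (c.pos i) (c.pos (!i))) :
    (stepRobot u A c i).1 = c.pos (!i) := by
  have h0 : obsDist (u i) (c.pos i) (c.pos (!i)) ≠ 0 := by positivity
  have h1 : ¬ obsDist (u i) (c.pos i) (c.pos (!i)) ≤ 1 := not_le.mpr hd
  rcases hst with h | h <;> simp [stepRobot, h, h0, h1, algo1]

/-- A robot in state `start` observing distance `≥ 1` (and `≠ 0`) jumps onto the other. -/
lemma stepR_start_far (u : Bool → ℝ) (A : Bool → Frame) (c : Config) (i : Bool)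
    (hst : c.st i = .start)
    (h0 : obsDist (u i) (c.pos i) (c.pos (!i)) ≠ 0)
    (hd : 1 ≤ obsDist (u i) (c.pos i) (c.pos (!i))) :
    (stepRobot u A c i).1 = c.pos (!i) := by
  have h1 : ¬ obsDist (u i) (c.pos i) (c.pos (!i)) < 1 := not_lt.mpr hd
  simp [stepRobot, hst, h0, h1, algo1]

/-- A robot in state `start` observing distance `0 < d < 1` moves away and enters `s1`. -/
lemma stepR_start_near (u : Bool → ℝ) (A : Bool → Frame) (c : Config) (i : Bool)
    (hst : c.st i = .start)
    (h0 : obsDist (u i) (c.pos i) (c.pos (!i)) ≠ 0)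
    (hd : obsDist (u i) (c.pos i) (c.pos (!i)) < 1) :
    stepRobot u A c i =
      (c.pos i + (1 - 1 / obsDist (u i) (c.pos i) (c.pos (!i))) • (c.pos (!i) - c.pos i),
        .s1) := by
  simp [stepRobot, hst, h0, hd, algo1]

/-- Lemma 10: `(S_1, S_start, {1}, [0, ∞))↓`. -/
theorem lemma_l3 :
    Down Cond.s1 Cond.start {(1 : ℝ)} (Set.Ici (0 : ℝ)) := by
  intro u A hu c0 hr hrI hs _ sched hfair
  have huf : 0 < u false := hu false
  have hus : 0 < u true := hu true
  have hr' : c0.st false = .s1 := hr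
  have hs' : c0.st true = .start := hs
  set p := c0.pos false with hp
  set q := c0.pos true with hq
  have hrd : obsDist (u false) p q = 1 := hrI
  have hD : ‖q - p‖ = u false := by
    rw [obsDist, div_eq_one_iff_eq (ne_of_gt huf)] at hrd
    exact hrd
  set ds := obsDist (u true) q p with hds
  have hds' : ds = u false / u true := by
    rw [hds, obsDist, norm_sub_rev, hD]
  have hds0 : 0 < ds := by rw [hds']; positivity
  -- first activation of robot s
  have hex : ∃ m, 0 ≤ m ∧ sched m true = true := hfair.2 true 0
  set m := Nat.find hex with hm
  have hmact : sched m true = true := (Nat.find_spec hex).2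
  have hmmin : ∀ k, k < m → sched k true = false := by
    intro k hk
    have := Nat.find_min hex hk
    simpa using this
  -- phase 1: before round m nothing geometric happens
  have phase1 : ∀ n, n ≤ m →
      (run u A sched c0 n).pos false = p ∧ (run u A sched c0 n).pos true = q ∧
      ((run u A sched c0 n).st false = .s1 ∨ (run u A sched c0 n).st false = .finish) ∧
      (run u A sched c0 n).st true = .start := by
    intro n
    induction n with
    | zero => exact fun _ => ⟨rfl, rfl, Or.inl hr', hs'⟩
    | succ n ih =>
      intro hnm
      obtain ⟨h1, h2, h3, h4⟩ := ih (Nat.le_of_succ_le hnm)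
      have hst : sched n true = false := hmmin n (Nat.lt_of_succ_le hnm)
      have hrun : run u A sched c0 (n + 1) = stepConfig u A (sched n) (run u A sched c0 n) := rfl
      have hstep : stepRobot u A (run u A sched c0 n) false = (p, .finish) := by
        rw [← h1]
        apply stepR_stay
        · exact h3
        · show obsDist (u false) ((run u A sched c0 n).pos false)
            ((run u A sched c0 n).pos true) = 1
          rw [h1, h2]; exact hrd
      rw [hrun]
      simp only [stepConfig, hst, hstep, if_false, Bool.false_eq_true]
      refine ⟨?_, h2, ?_, h4⟩
      · split <;> simp [h1]
      · split <;> simp [h3]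
  obtain ⟨hm1, hm2, hm3, hm4⟩ := phase1 m le_rfl
  -- the observed distance of s at round m
  have hmd : obsDist (u true) ((run u A sched c0 m).pos true)
      ((run u A sched c0 m).pos false) = ds := by rw [hm1, hm2]
  have hmd0 : obsDist (u true) ((run u A sched c0 m).pos true)
      ((run u A sched c0 m).pos false) ≠ 0 := by rw [hmd]; exact ne_of_gt hds0
  rcases le_or_gt 1 ds with hcase | hcase
  · -- s jumps onto r at round m: rendezvous at m+1
    have hstepS : (stepRobot u A (run u A sched c0 m) true).1 = p := by
      have := stepR_start_far u A (run u A sched c0 m) true hm4 (by simpa using hmd0)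
        (by rw [show ((!true : Bool)) = false from rfl, hmd]; exact hcase)
      rw [this]; exact hm1
    have hall : ∀ i, (run u A sched c0 (m+1)).pos i = (run u A sched c0 (m+1)).pos false := by
      have hrun : run u A sched c0 (m + 1) = stepConfig u A (sched m) (run u A sched c0 m) := rfl
      have hposf : (run u A sched c0 (m+1)).pos false = p := by
        rw [hrun]; simp only [stepConfig]
        split
        · have hst := stepR_stay u A (run u A sched c0 m) false hm3
            (by show obsDist (u false) ((run u A sched c0 m).pos false)
                  ((run u A sched c0 m).pos true) = 1
                rw [hm1, hm2]; exact hrd)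
          rw [hst]; exact hm1
        · exact hm1
      have hpost : (run u A sched c0 (m+1)).pos true = p := by
        rw [hrun]; simp only [stepConfig, hmact, if_true]
        exact hstepS
      intro i; cases i <;> simp [hposf, hpost]
    exact ⟨m + 1, fun n hn i => run_frozen u A sched c0 (m+1) hall n hn i⟩
  · -- s moves away to distance `u true`; r later jumps onto s
    set q2 := q + (1 - 1/ds) • (p - q) with hq2
    have hq2p : q2 - p = ds⁻¹ • (q - p) := by
      rw [hq2]; module
    have hq2norm : ‖q2 - p‖ = u true := by
      rw [hq2p, norm_smul, hD, Real.norm_eq_abs, abs_inv,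
        abs_of_pos hds0, hds']
      field_simp
    have hobs_r : obsDist (u false) p q2 = u true / u false := by
      rw [obsDist, hq2norm]
    have hobs_r1 : 1 < obsDist (u false) p q2 := by
      rw [hobs_r]
      rw [hds', div_lt_one hus] at hcase
      rw [lt_div_iff₀ huf]; linarith
    have hobs_s : obsDist (u true) q2 p = 1 := by
      rw [obsDist, norm_sub_rev, hq2norm, div_self (ne_of_gt hus)]
    -- configuration at round m+1
    have hstepS : stepRobot u A (run u A sched c0 m) true =
        (q2, .s1) := by
      have := stepR_start_near u A (run u A sched c0 m) true hm4
        (by simpa using hmd0)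
        (by show obsDist (u true) ((run u A sched c0 m).pos true)
              ((run u A sched c0 m).pos false) < 1
            rw [hmd]; exact hcase)
      simp only [Bool.not_true] at this
      rw [this, hmd, hm1, hm2, hq2]
    have hM1 : (run u A sched c0 (m+1)).pos false = p ∧
        (run u A sched c0 (m+1)).pos true = q2 ∧
        ((run u A sched c0 (m+1)).st false = .s1 ∨ (run u A sched c0 (m+1)).st false = .finish) ∧
        ((run u A sched c0 (m+1)).st true = .s1 ∨ (run u A sched c0 (m+1)).st true = .finish) := by
      have hrun : run u A sched c0 (m + 1) = stepConfig u A (sched m) (run u A sched c0 m) := rfl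
      have hstepF := stepR_stay u A (run u A sched c0 m) false hm3
        (by show obsDist (u false) ((run u A sched c0 m).pos false)
              ((run u A sched c0 m).pos true) = 1
            rw [hm1, hm2]; exact hrd)
      rw [hrun]
      simp only [stepConfig, hmact, if_true]
      refine ⟨?_, by rw [hstepS], ?_, by rw [hstepS]; exact Or.inl rfl⟩
      · split
        · rw [hstepF]; exact hm1
        · exact hm1
      · split
        · rw [hstepF]; exact Or.inr rfl
        · exact hm3
    -- first activation of robot r after round m
    have hex2 : ∃ k, m + 1 ≤ k ∧ sched k false = true := hfair.2 false (m+1)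
    set M := Nat.find hex2 with hM
    have hMact : sched M false = true := (Nat.find_spec hex2).2
    have hMge : m + 1 ≤ M := (Nat.find_spec hex2).1
    have hMmin : ∀ k, m + 1 ≤ k → k < M → sched k false = false := by
      intro k hk1 hk2
      have := Nat.find_min hex2 hk2
      simp only [not_and] at this
      simpa using this hk1
    -- phase 2
    have phase2 : ∀ n, m + 1 ≤ n → n ≤ M →
        (run u A sched c0 n).pos false = p ∧ (run u A sched c0 n).pos true = q2 ∧
        ((run u A sched c0 n).st false = .s1 ∨ (run u A sched c0 n).st false = .finish) ∧
        ((run u A sched c0 n).st true = .s1 ∨ (run u A sched c0 n).st true = .finish) := by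
      intro n
      induction n with
      | zero => omega
      | succ n ih =>
        intro hn1 hn2
        rcases Nat.lt_or_ge (m + 1) (n + 1) with h' | h'
        · have hn1' : m + 1 ≤ n := Nat.lt_succ_iff.mp h'
          obtain ⟨h1, h2, h3, h4⟩ := ih hn1' (le_of_lt (Nat.lt_of_succ_le hn2))
          have hst : sched n false = false := hMmin n hn1' (Nat.lt_of_succ_le hn2)
          have hrun : run u A sched c0 (n + 1) =
            stepConfig u A (sched n) (run u A sched c0 n) := rfl
          have hstepT := stepR_stay u A (run u A sched c0 n) true h4
            (by show obsDist (u true) ((run u A sched c0 n).pos true)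
                  ((run u A sched c0 n).pos false) = 1
                rw [h1, h2]; exact hobs_s)
          rw [hrun]
          simp only [stepConfig, hst, if_false, Bool.false_eq_true]
          refine ⟨h1, ?_, h3, ?_⟩
          · split
            · rw [hstepT]; exact h2
            · exact h2
          · split
            · rw [hstepT]; exact Or.inr rfl
            · exact h4
        · have : n + 1 = m + 1 := le_antisymm h' hn1
          rw [this]; exact hM1
    obtain ⟨h1, h2, h3, h4⟩ := phase2 M hMge le_rfl
    -- at round M robot r jumps onto q2, robot s (if activated) stays
    have hall : ∀ i, (run u A sched c0 (M+1)).pos i = (run u A sched c0 (M+1)).pos false := by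
      have hrun : run u A sched c0 (M + 1) = stepConfig u A (sched M) (run u A sched c0 M) := rfl
      have hstepF := stepR_far u A (run u A sched c0 M) false h3
        (by show 1 < obsDist (u false) ((run u A sched c0 M).pos false)
              ((run u A sched c0 M).pos true)
            rw [h1, h2]; exact hobs_r1)
      have hposf : (run u A sched c0 (M+1)).pos false = q2 := by
        rw [hrun]; simp only [stepConfig, hMact, if_true]
        rw [hstepF]
        exact h2
      have hpost : (run u A sched c0 (M+1)).pos true = q2 := by
        rw [hrun]; simp only [stepConfig]
        split
        · have hstepT := stepR_stay u A (run u A sched c0 M) true h4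
            (by show obsDist (u true) ((run u A sched c0 M).pos true)
                  ((run u A sched c0 M).pos false) = 1
                rw [h1, h2]; exact hobs_s)
          rw [hstepT]; exact h2
        · exact h2
      intro i; cases i <;> simp [hposf, hpost]
    exact ⟨M + 1, fun n hn i => run_frozen u A sched c0 (M+1) hall n hn i⟩
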